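/- arXiv:2012.10081 — 3 statements merged into one kernel-verified Lean document; each statement's English description precedes it below -/
import Mathlib

section
/- The Jensen bound dominates the spectral bound with all eigenvalues: Let C ⊆ F_q^{mℓ} be a nonzero λ-QT code with nonempty eigenvalue set Ω̄ ⊆ Ω. Let D_{Ω̄} ⊆ F^m be the λ-constacyclic code over F with zero set Ω̄, and let ℂ_{Ω̄} be the eigencode of ∩_{β∈Ω̄} V_β. Let i_1,…,i_t be the indices with nonzero constituent C_{i_j}, ordered so that d(C_{i_1}) ≤ ⋯ ≤ d(C_{i_t}), and for each r let Θ_r be the λ-constacyclic code over F_q with generator polynomial (x^m−λ)/(f_{i_1}⋯f_{i_r}). Then the Jensen estimate d_J = min over 1 ≤ r ≤ t of d(C_{i_r})·d(Θ_r) satisfies d(C) ≥ d_J ≥ min{ d(D_{Ω̄}), d(ℂ_{Ω̄}) }. -/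
open Polynomial

open scoped Classical in
/-- Hamming weight: the number of nonzero coordinates. -/
noncomputable def wt {ι K : Type*} [Fintype ι] [Zero K] (c : ι → K) : ℕ :=
  (Finset.univ.filter fun i => c i ≠ 0).card

/-- Minimum Hamming weight of a nonzero codeword of `S`, with `⊤` for the zero code. -/
noncomputable def minDist {ι K : Type*} [Fintype ι] [Zero K] (S : Set (ι → K)) : ℕ∞ :=
  sInf {n : ℕ∞ | ∃ c ∈ S, c ≠ 0 ∧ (wt c : ℕ∞) = n}

/-- The λ-constashift by ℓ positions on m×ℓ arrays: row 0 becomes λ times old last row. -/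
def rho {Fq : Type*} [Field Fq] (m ℓ : ℕ) [NeZero m] (lam : Fq)
    (c : ZMod m × Fin ℓ → Fq) : ZMod m × Fin ℓ → Fq :=
  fun p => (if p.1 = 0 then lam else 1) * c (p.1 - 1, p.2)

/-- Reduction of a vector of polynomials mod `X^m - λ`, written as an m×ℓ array. -/
noncomputable def arrOf {Fq : Type*} [Field Fq] (m ℓ : ℕ) [NeZero m] (lam : Fq)
    (v : Fin ℓ → Polynomial Fq) : ZMod m × Fin ℓ → Fq :=
  fun p => ((v p.2) %ₘ (Polynomial.X ^ m - Polynomial.C lam)).coeff (p.1).val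

/-- The λ-constacyclic code of length `m` over `F` with zero set `P`. -/
def Dcode {F : Type*} [Field F] (m : ℕ) (P : Set F) : Set (Fin m → F) :=
  {c | ∀ β ∈ P, ∑ k : Fin m, c k * β ^ (k : ℕ) = 0}

/-- The eigenspace of `β` for the polynomial matrix `G`: the null space of `G(β)`. -/
def Vspace {Fq F : Type*} [Field Fq] [Field F] [Algebra Fq F] (ℓ : ℕ)
    (G : Matrix (Fin ℓ) (Fin ℓ) (Polynomial Fq)) (β : F) : Set (Fin ℓ → F) :=
  {v | (G.map fun p => Polynomial.aeval β p).mulVec v = 0}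

/-- The eigencode of a set of vectors `V ⊆ F^ℓ`. -/
def eigencode {Fq F : Type*} [Field Fq] [Field F] [Algebra Fq F] (ℓ : ℕ)
    (V : Set (Fin ℓ → F)) : Set (Fin ℓ → Fq) :=
  {u | ∀ v ∈ V, ∑ j, v j * algebraMap Fq F (u j) = 0}


open scoped Classical

namespace JDS

variable {ι K K' : Type*} [Fintype ι] [Zero K] [Zero K']

lemma wt_eq_zero_iff {c : ι → K} : wt c = 0 ↔ c = 0 := by
  unfold wt
  rw [Finset.card_eq_zero, Finset.filter_eq_empty_iff]
  constructor
  · intro h; funext i; simpa using h (Finset.mem_univ i)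
  · intro h i _; simp [h]

lemma minDist_le {S : Set (ι → K)} {c : ι → K} (h : c ∈ S) (h0 : c ≠ 0) :
    minDist S ≤ (wt c : ℕ∞) := sInf_le ⟨c, h, h0, rfl⟩

lemma le_minDist {S : Set (ι → K)} {a : ℕ∞} (h : ∀ c ∈ S, c ≠ 0 → a ≤ (wt c : ℕ∞)) :
    a ≤ minDist S := le_sInf (by rintro n ⟨c, hc, h0, rfl⟩; exact h c hc h0)

lemma one_le_minDist (S : Set (ι → K)) : (1 : ℕ∞) ≤ minDist S := by
  refine le_minDist fun c _ h0 => ?_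
  have : wt c ≠ 0 := fun h => h0 (wt_eq_zero_iff.mp h)
  exact_mod_cast Nat.one_le_iff_ne_zero.mpr this

lemma wt_le_wt {c : ι → K} {d : ι → K'} (h : ∀ i, c i ≠ 0 → d i ≠ 0) : wt c ≤ wt d := by
  unfold wt
  exact Finset.card_le_card (fun i hi => by
    simp only [Finset.mem_filter, Finset.mem_univ, true_and] at hi ⊢
    exact h i hi)

variable {Fq : Type*} [Field Fq] (m ℓ : ℕ) [NeZero m]

noncomputable def cpoly (c : ZMod m × Fin ℓ → Fq) (j : Fin ℓ) : Polynomial Fq :=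
  ∑ k : Fin m, Polynomial.C (c (((k : ℕ) : ZMod m), j)) * Polynomial.X ^ (k : ℕ)

noncomputable def zEquiv : Fin m ≃ ZMod m where
  toFun k := ((k : ℕ) : ZMod m)
  invFun k := ⟨k.val, ZMod.val_lt k⟩
  left_inv k := by ext; simp [ZMod.val_cast_of_lt k.isLt]
  right_inv k := ZMod.natCast_rightInverse k

lemma cpoly_coeff (c : ZMod m × Fin ℓ → Fq) (j : Fin ℓ) (k : ZMod m) :
    (cpoly m ℓ c j).coeff k.val = c (k, j) := by
  unfold cpoly
  rw [finset_sum_coeff]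
  rw [Finset.sum_eq_single (⟨k.val, ZMod.val_lt k⟩ : Fin m)]
  · simp [coeff_C_mul, coeff_X_pow, ZMod.natCast_rightInverse k]
  · intro b _ hb
    have hne : k.val ≠ (b : ℕ) := by
      intro h; exact hb (by ext; exact h.symm)
    simp [coeff_C_mul, coeff_X_pow, hne]
  · intro h; exact absurd (Finset.mem_univ _) h

omit [NeZero m] in
lemma cpoly_degree (c : ZMod m × Fin ℓ → Fq) (j : Fin ℓ) :
    (cpoly m ℓ c j).degree < ((m : ℕ) : WithBot ℕ) := by
  refine lt_of_le_of_lt (degree_sum_le _ _) ?_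
  rw [Finset.sup_lt_iff (by exact_mod_cast WithBot.bot_lt_coe m)]
  intro k _
  exact lt_of_le_of_lt (degree_C_mul_X_pow_le _ _) (by exact_mod_cast k.isLt)

lemma cpoly_eval {F : Type*} [Field F] [Algebra Fq F] (c : ZMod m × Fin ℓ → Fq)
    (j : Fin ℓ) (β : F) :
    aeval β (cpoly m ℓ c j) = ∑ k : ZMod m, algebraMap Fq F (c (k, j)) * β ^ k.val := by
  unfold cpoly
  rw [map_sum, ← Equiv.sum_comp (zEquiv m) (fun k : ZMod m => algebraMap Fq F (c (k, j)) * β ^ k.val)]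
  refine Finset.sum_congr rfl fun k _ => ?_
  have hv : (((k : ℕ) : ZMod m)).val = (k : ℕ) := ZMod.val_cast_of_lt k.isLt
  simp [zEquiv, hv, aeval_C]

omit [NeZero m] in
lemma cpoly_eq_zero (c : ZMod m × Fin ℓ → Fq) (j : Fin ℓ)
    (h : ∀ k : Fin m, c (((k : ℕ) : ZMod m), j) = 0) : cpoly m ℓ c j = 0 := by
  unfold cpoly
  exact Finset.sum_eq_zero fun k _ => by rw [h k, map_zero, zero_mul]

lemma wt_sum_cols (c : ZMod m × Fin ℓ → Fq) :
    wt c = ∑ j : Fin ℓ, wt (fun k : Fin m => c (((k : ℕ) : ZMod m), j)) := by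
  unfold wt
  rw [Finset.card_filter, Fintype.sum_prod_type, Finset.sum_comm]
  refine Finset.sum_congr rfl fun j _ => ?_
  rw [Finset.card_filter,
    ← Equiv.sum_comp (zEquiv m) (fun k : ZMod m => if c (k, j) ≠ 0 then 1 else 0)]
  rfl

end JDS

open JDS in
theorem jensen_dominates_spectral
    {Fq F : Type*} [Field Fq] [Fintype Fq] [Field F] [Algebra Fq F]
    (m ℓ : ℕ) [NeZero m] (hcop : Nat.Coprime m (Fintype.card Fq))
    (lam : Fq) (hlam : lam ≠ 0)
    (hsplit : IsSplittingField Fq F (X ^ m - C lam))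
    (𝓒 : Submodule Fq (ZMod m × Fin ℓ → Fq))
    (hQT : ∀ c ∈ 𝓒, rho m ℓ lam c ∈ 𝓒)
    (G : Matrix (Fin ℓ) (Fin ℓ) (Polynomial Fq))
    (htri : ∀ i j, j < i → G i j = 0)
    (hdiv : ∀ j, G j j ∣ X ^ m - C lam)
    (hGen : ∀ v : Fin ℓ → Polynomial Fq,
      arrOf m ℓ lam v ∈ 𝓒 ↔ v ∈ Submodule.span (Polynomial Fq) (Set.range fun i j => G i j))
    (h0 : 𝓒 ≠ ⊥)
    (Ωbar : Set F)
    (hΩbar : Ωbar = {x : F | x ^ m = algebraMap Fq F lam ∧ Polynomial.aeval x G.det = 0})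
    (hne : Ωbar.Nonempty)
    (s : ℕ) (f : Fin s → Polynomial Fq)
    (hmon : ∀ i, (f i).Monic) (hirr : ∀ i, Irreducible (f i))
    (hfinj : Function.Injective f)
    (hprod : ∏ i, f i = X ^ m - C lam)
    (βc : Fin s → F) (hβc : ∀ i, Polynomial.aeval (βc i) (f i) = 0)
    (Const : Fin s → Set (Fin ℓ → F))
    (hConst : ∀ i, Const i =
      {w | ∃ c ∈ 𝓒, w = fun j => ∑ k : ZMod m, algebraMap Fq F (c (k, j)) * βc i ^ k.val})
    (t : ℕ) (σ : Fin t → Fin s) (hσinj : Function.Injective σ)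
    (hnz : ∀ r, ∃ w ∈ Const (σ r), w ≠ 0)
    (hcover : ∀ i, (∃ w ∈ Const i, w ≠ 0) → ∃ r, σ r = i)
    (hmono : Monotone fun r => minDist (Const (σ r)))
    (Θ : Fin t → Set (Fin m → Fq))
    (hΘ : ∀ r, Θ r = {c | ((X ^ m - C lam) / ∏ j ∈ Finset.Iic r, f (σ j)) ∣
        ∑ k : Fin m, Polynomial.C (c k) * X ^ (k : ℕ)})
    (dJ : ℕ∞) (hdJ : dJ = ⨅ r, minDist (Const (σ r)) * minDist (Θ r)) :
    dJ ≤ minDist (𝓒 : Set (ZMod m × Fin ℓ → Fq)) ∧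
    min (minDist (Dcode (F := F) m Ωbar))
        (minDist (eigencode (Fq := Fq) ℓ (⋂ β ∈ Ωbar, Vspace ℓ G β))) ≤ dJ := by
  classical
  have hm : m ≠ 0 := NeZero.ne m
  have hm0 : 0 < m := Nat.pos_of_ne_zero hm
  have hDmonic : (X ^ m - C lam : Polynomial Fq).Monic := monic_X_pow_sub_C lam hm
  have hDdeg : (X ^ m - C lam : Polynomial Fq).degree = (m : ℕ) := degree_X_pow_sub_C hm0 lam
  have hDne : (X ^ m - C lam : Polynomial Fq) ≠ 0 := hDmonic.ne_zero
  haveI : IsSplittingField Fq F (X ^ m - C lam) := hsplit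
  haveI : FiniteDimensional Fq F := IsSplittingField.finiteDimensional F (X ^ m - C lam)
  haveI : Normal Fq F := Normal.of_isSplittingField (X ^ m - C lam)
  haveI : IsGalois Fq F := ⟨⟩
  -- basic facts about the f i
  have hfmin : ∀ (i : Fin s) (β : F), aeval β (f i) = 0 → minpoly Fq β = f i :=
    fun i β h => (minpoly.eq_of_irreducible_of_monic (hirr i) h (hmon i)).symm
  have hfdvdD : ∀ i, f i ∣ (X ^ m - C lam : Polynomial Fq) := by
    intro i; rw [← hprod]; exact Finset.dvd_prod_of_mem f (Finset.mem_univ i)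
  have hβm : ∀ i, βc i ^ m = algebraMap Fq F lam := by
    intro i
    obtain ⟨g, hg⟩ := hfdvdD i
    have : aeval (βc i) (X ^ m - C lam : Polynomial Fq) = 0 := by
      rw [hg, map_mul, hβc i, zero_mul]
    rw [map_sub, map_pow, aeval_X, aeval_C] at this
    exact sub_eq_zero.mp this
  have hcopr : ∀ i i' : Fin s, i ≠ i' → IsCoprime (f i) (f i') := by
    intro i i' hii
    rw [(hirr i).coprime_iff_not_dvd]
    intro hdv
    exact hii (hfinj (Polynomial.eq_of_monic_of_associated (hmon i) (hmon i')
      ((hirr i).associated_of_dvd (hirr i') hdv)))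
  have hdvd_many : ∀ (T : Finset (Fin s)) (p : Polynomial Fq),
      (∀ i ∈ T, aeval (βc i) p = 0) → (∏ i ∈ T, f i) ∣ p := by
    intro T p hp
    refine Finset.prod_dvd_of_coprime ?_ ?_
    · intro i _ i' _ hii; exact hcopr i i' hii
    · intro i hi
      rw [← hfmin i (βc i) (hβc i)]
      exact minpoly.dvd Fq (βc i) (hp i hi)
  -- quotient identity
  have hprodne : ∀ r : Fin t, (∏ j ∈ Finset.Iic r, f (σ j)) ≠ 0 := by
    intro r
    rw [Finset.prod_ne_zero_iff]
    exact fun j _ => (hmon (σ j)).ne_zero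
  have hfacc : ∀ r : Fin t,
      (∏ i ∈ Finset.univ \ (Finset.Iic r).image σ, f i) * (∏ j ∈ Finset.Iic r, f (σ j))
        = (X ^ m - C lam : Polynomial Fq) := by
    intro r
    have h1 : ∏ i ∈ (Finset.Iic r).image σ, f i = ∏ j ∈ Finset.Iic r, f (σ j) :=
      Finset.prod_image (fun a _ b _ h => hσinj h)
    rw [← h1, Finset.prod_sdiff (Finset.subset_univ _), hprod]
  have hprodmon : ∀ r : Fin t, (∏ j ∈ Finset.Iic r, f (σ j)).Monic :=
    fun r => monic_prod_of_monic _ _ fun j _ => hmon (σ j)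
  have hquot : ∀ r : Fin t,
      (X ^ m - C lam : Polynomial Fq) / (∏ j ∈ Finset.Iic r, f (σ j))
        = ∏ i ∈ Finset.univ \ (Finset.Iic r).image σ, f i := by
    intro r
    rw [← divByMonic_eq_div _ (hprodmon r), ← hfacc r, mul_comm,
      mul_divByMonic_cancel_left _ (hprodmon r)]
  -- Ωbar facts
  subst hΩbar
  have hΩτ : ∀ (τ : F ≃ₐ[Fq] F) (β : F),
      β ∈ {x : F | x ^ m = algebraMap Fq F lam ∧ aeval x G.det = 0} →
      τ β ∈ {x : F | x ^ m = algebraMap Fq F lam ∧ aeval x G.det = 0} := by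
    intro τ β hβ
    obtain ⟨h1, h2⟩ := hβ
    constructor
    · rw [← map_pow, h1, AlgEquiv.commutes]
    · have h3 : aeval (τ β) G.det = τ (aeval β G.det) :=
        (Polynomial.aeval_algHom_apply τ.toAlgHom β G.det)
      rw [h3, h2, map_zero]
  -- generator span facts
  have harr : ∀ c : ZMod m × Fin ℓ → Fq, arrOf m ℓ lam (cpoly m ℓ c) = c := by
    intro c; funext p
    show ((cpoly m ℓ c p.2) %ₘ (X ^ m - C lam)).coeff p.1.val = c p
    rw [(modByMonic_eq_self_iff hDmonic).mpr (by rw [hDdeg]; exact cpoly_degree m ℓ c p.2)]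
    rw [cpoly_coeff m ℓ c p.2 p.1]
  have hPmem : ∀ c ∈ 𝓒, cpoly m ℓ c ∈ Submodule.span (Polynomial Fq)
      (Set.range fun i j => G i j) := by
    intro c hc
    exact (hGen (cpoly m ℓ c)).mp (by rw [harr]; exact hc)
  have horth : ∀ v ∈ Submodule.span (Polynomial Fq) (Set.range fun i j => G i j),
      ∀ (β : F) (u : Fin ℓ → F), u ∈ Vspace ℓ G β → ∑ j, aeval β (v j) * u j = 0 := by
    intro v hv
    induction hv using Submodule.span_induction with
    | mem x hx =>
      obtain ⟨i, rfl⟩ := hx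
      intro β u hu
      have h := congrFun hu i
      simpa [Matrix.mulVec, dotProduct, Matrix.map_apply] using h
    | zero => intro β u _; simp
    | add x y hx hy ihx ihy =>
      intro β u hu
      have := ihx β u hu
      have := ihy β u hu
      simp only [Pi.add_apply, map_add, add_mul, Finset.sum_add_distrib]
      rw [ihx β u hu, ihy β u hu, add_zero]
    | smul a x hx ihx =>
      intro β u hu
      simp only [Pi.smul_apply, smul_eq_mul, map_mul, mul_assoc]
      rw [← Finset.mul_sum, ihx β u hu, mul_zero]
  have hconst_mem : ∀ (c : ZMod m × Fin ℓ → Fq), c ∈ 𝓒 → ∀ i : Fin s,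
      (fun j => aeval (βc i) (cpoly m ℓ c j)) ∈ Const i := by
    intro c hc i
    rw [hConst i]
    exact ⟨c, hc, by funext j; rw [cpoly_eval]⟩
  -- eigencode key lemma
  have hEkey : ∀ i : Fin s,
      βc i ∈ {x : F | x ^ m = algebraMap Fq F lam ∧ aeval x G.det = 0} →
      minDist (eigencode (Fq := Fq) ℓ
          (⋂ β ∈ {x : F | x ^ m = algebraMap Fq F lam ∧ aeval x G.det = 0}, Vspace ℓ G β))
        ≤ minDist (Const i) := by
    intro i hi
    refine le_minDist ?_
    intro w hw hw0
    rw [hConst i] at hw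
    obtain ⟨c, hc, rfl⟩ := hw
    have hwj : ∀ j, (fun j => ∑ k : ZMod m, algebraMap Fq F (c (k, j)) * βc i ^ k.val) j
        = aeval (βc i) (cpoly m ℓ c j) := fun j => (cpoly_eval m ℓ c j (βc i)).symm
    obtain ⟨j₀, hj₀x⟩ := Function.ne_iff.mp hw0
    have hj₀ : aeval (βc i) (cpoly m ℓ c j₀) ≠ 0 := by
      rw [cpoly_eval]; simpa using hj₀x
    have hγ : ∃ γ : F, Algebra.trace Fq F (γ * aeval (βc i) (cpoly m ℓ c j₀)) ≠ 0 := by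
      by_contra hcon
      push_neg at hcon
      refine hj₀ ((traceForm_nondegenerate Fq F).1 _ ?_)
      intro n
      rw [Algebra.traceForm_apply, mul_comm]
      exact hcon n
    obtain ⟨γ, hγ⟩ := hγ
    set u : Fin ℓ → Fq := fun j => Algebra.trace Fq F (γ * aeval (βc i) (cpoly m ℓ c j)) with hu
    have hu0 : u ≠ 0 := by
      intro h; exact hγ (by simpa [hu] using congrFun h j₀)
    have huE : u ∈ eigencode (Fq := Fq) ℓ
        (⋂ β ∈ {x : F | x ^ m = algebraMap Fq F lam ∧ aeval x G.det = 0}, Vspace ℓ G β) := by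
      intro v hv
      have hvV : ∀ β ∈ {x : F | x ^ m = algebraMap Fq F lam ∧ aeval x G.det = 0},
          v ∈ Vspace ℓ G β := by
        intro β hβ
        exact Set.mem_iInter₂.mp hv β hβ
      have htr : ∀ j, algebraMap Fq F (u j)
          = ∑ τ : F ≃ₐ[Fq] F, τ γ * aeval (τ (βc i)) (cpoly m ℓ c j) := by
        intro j
        rw [hu, trace_eq_sum_automorphisms]
        refine Finset.sum_congr rfl fun τ _ => ?_
        rw [map_mul]
        congr 1
        exact (Polynomial.aeval_algHom_apply τ.toAlgHom (βc i) (cpoly m ℓ c j)).symm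
      calc ∑ j, v j * algebraMap Fq F (u j)
          = ∑ j, ∑ τ : F ≃ₐ[Fq] F, v j * (τ γ * aeval (τ (βc i)) (cpoly m ℓ c j)) := by
            refine Finset.sum_congr rfl fun j _ => ?_
            rw [htr j, Finset.mul_sum]
        _ = ∑ τ : F ≃ₐ[Fq] F, τ γ * ∑ j, aeval (τ (βc i)) (cpoly m ℓ c j) * v j := by
            rw [Finset.sum_comm]
            refine Finset.sum_congr rfl fun τ _ => ?_
            rw [Finset.mul_sum]
            refine Finset.sum_congr rfl fun j _ => ?_
            ring
        _ = 0 := by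
            refine Finset.sum_eq_zero fun τ _ => ?_
            rw [horth (cpoly m ℓ c) (hPmem c hc) (τ (βc i)) v (hvV _ (hΩτ τ _ hi)), mul_zero]
    calc minDist (eigencode (Fq := Fq) ℓ
          (⋂ β ∈ {x : F | x ^ m = algebraMap Fq F lam ∧ aeval x G.det = 0}, Vspace ℓ G β))
        ≤ (wt u : ℕ∞) := minDist_le huE hu0
      _ ≤ _ := by
          refine Nat.cast_le.mpr (wt_le_wt fun j hj => ?_)
          intro h
          have h' : aeval (βc i) (cpoly m ℓ c j) = 0 := by
            rw [cpoly_eval]; simpa using h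
          exact hj (by simp [hu, h'])
  -- Dcode key lemma
  have hDkey : ∀ r : Fin t,
      (∀ β ∈ {x : F | x ^ m = algebraMap Fq F lam ∧ aeval x G.det = 0},
        aeval β (∏ j ∈ Finset.Iic r, f (σ j)) ≠ 0) →
      minDist (Dcode (F := F) m {x : F | x ^ m = algebraMap Fq F lam ∧ aeval x G.det = 0})
        ≤ minDist (Θ r) := by
    intro r hr
    refine le_minDist ?_
    intro cθ hcθ hcθ0
    rw [hΘ r] at hcθ
    have hmap : (fun k => algebraMap Fq F (cθ k)) ∈
        Dcode (F := F) m {x : F | x ^ m = algebraMap Fq F lam ∧ aeval x G.det = 0} := by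
      intro β hβ
      have h1 : ∑ k : Fin m, algebraMap Fq F (cθ k) * β ^ (k : ℕ)
          = aeval β (∑ k : Fin m, Polynomial.C (cθ k) * X ^ (k : ℕ)) := by
        rw [map_sum]
        refine Finset.sum_congr rfl fun k _ => ?_
        rw [map_mul, aeval_C, map_pow, aeval_X]
      have h2 : aeval β ((X ^ m - C lam : Polynomial Fq) / ∏ j ∈ Finset.Iic r, f (σ j)) = 0 := by
        have h3 : aeval β ((X ^ m - C lam : Polynomial Fq) / ∏ j ∈ Finset.Iic r, f (σ j))
            * aeval β (∏ j ∈ Finset.Iic r, f (σ j)) = 0 := by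
          rw [← map_mul, hquot r, hfacc r, map_sub, map_pow, aeval_X, aeval_C, hβ.1, sub_self]
        rcases mul_eq_zero.mp h3 with h | h
        · exact h
        · exact absurd h (hr β hβ)
      obtain ⟨g, hg⟩ := hcθ
      rw [h1, hg, map_mul, h2, zero_mul]
    have hmap0 : (fun k => algebraMap Fq F (cθ k)) ≠ 0 := by
      intro h
      refine hcθ0 (funext fun k => ?_)
      have := congrFun h k
      rw [Pi.zero_apply] at this ⊢
      exact (algebraMap Fq F).injective (by rwa [map_zero])
    calc minDist (Dcode (F := F) m {x : F | x ^ m = algebraMap Fq F lam ∧ aeval x G.det = 0})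
        ≤ (wt (fun k => algebraMap Fq F (cθ k)) : ℕ∞) := minDist_le hmap hmap0
      _ ≤ _ := Nat.cast_le.mpr (wt_le_wt fun k hk h => hk (by rw [h, map_zero]))
  constructor
  · -- Part 1: Jensen bound
    rw [hdJ]
    refine le_minDist ?_
    intro c hc hc0
    obtain ⟨p0, hp0⟩ := Function.ne_iff.mp hc0
    rw [Pi.zero_apply] at hp0
    -- the set of indices r with nonzero constituent evaluation
    set A : Finset (Fin t) :=
      Finset.univ.filter (fun r => ∃ j, aeval (βc (σ r)) (cpoly m ℓ c j) ≠ 0) with hA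
    have hAne : A.Nonempty := by
      have hP0 : cpoly m ℓ c p0.2 ≠ 0 := by
        intro h
        exact hp0 (by rw [← cpoly_coeff m ℓ c p0.2 p0.1, h, coeff_zero])
      have hex : ∃ i, aeval (βc i) (cpoly m ℓ c p0.2) ≠ 0 := by
        by_contra hcon
        push_neg at hcon
        have hdv : (X ^ m - C lam : Polynomial Fq) ∣ cpoly m ℓ c p0.2 := by
          rw [← hprod]
          exact hdvd_many Finset.univ _ (fun i _ => hcon i)
        have hle := degree_le_of_dvd hdv hP0
        rw [hDdeg] at hle
        exact absurd (lt_of_le_of_lt hle (cpoly_degree m ℓ c p0.2)) (lt_irrefl _)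
      obtain ⟨i, hi⟩ := hex
      obtain ⟨r, hr⟩ := hcover i ⟨_, hconst_mem c hc i,
        fun h => hi (by simpa using congrFun h p0.2)⟩
      refine ⟨r, ?_⟩
      rw [hA, Finset.mem_filter]
      exact ⟨Finset.mem_univ _, ⟨p0.2, by rw [hr]; exact hi⟩⟩
    set rs : Fin t := A.max' hAne with hrs
    have hrsA : rs ∈ A := A.max'_mem hAne
    have hrprop : ∃ j, aeval (βc (σ rs)) (cpoly m ℓ c j) ≠ 0 := by
      rw [hA, Finset.mem_filter] at hrsA
      exact hrsA.2
    -- columns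
    set col : Fin ℓ → (Fin m → Fq) := fun j k => c (((k : ℕ) : ZMod m), j) with hcol
    have hcolzero : ∀ j, col j = 0 → cpoly m ℓ c j = 0 := by
      intro j h
      exact cpoly_eq_zero m ℓ c j (fun k => by simpa using congrFun h k)
    have hvanish : ∀ i, i ∉ (Finset.Iic rs).image σ →
        ∀ j, aeval (βc i) (cpoly m ℓ c j) = 0 := by
      intro i hi j
      by_contra hne'
      obtain ⟨r, hr⟩ := hcover i ⟨_, hconst_mem c hc i,
        fun h => hne' (by simpa using congrFun h j)⟩
      have hrA : r ∈ A := by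
        rw [hA, Finset.mem_filter]
        exact ⟨Finset.mem_univ _, ⟨j, by rw [hr]; exact hne'⟩⟩
      exact hi (Finset.mem_image.mpr ⟨r, Finset.mem_Iic.mpr (A.le_max' r hrA), hr⟩)
    have hcolΘ : ∀ j, col j ∈ Θ rs := by
      intro j
      rw [hΘ rs]
      show ((X ^ m - C lam : Polynomial Fq) / ∏ j' ∈ Finset.Iic rs, f (σ j')) ∣ _
      rw [hquot rs]
      have : (∑ k : Fin m, Polynomial.C (col j k) * X ^ (k : ℕ)) = cpoly m ℓ c j := rfl
      rw [this]
      refine hdvd_many _ _ (fun i hi => ?_)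
      exact hvanish i (Finset.mem_sdiff.mp hi).2 j
    set w : Fin ℓ → F := fun j => aeval (βc (σ rs)) (cpoly m ℓ c j) with hwdef
    have hwC : w ∈ Const (σ rs) := hconst_mem c hc (σ rs)
    obtain ⟨j1, hj1⟩ := hrprop
    have hw0 : w ≠ 0 := fun h => hj1 (by simpa [hwdef] using congrFun h j1)
    set N : Finset (Fin ℓ) := Finset.univ.filter (fun j => col j ≠ 0) with hN
    have hwN : wt w ≤ N.card := by
      refine Finset.card_le_card ?_
      intro j hj
      rw [hN, Finset.mem_filter]
      refine ⟨Finset.mem_univ _, ?_⟩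
      intro h
      rw [Finset.mem_filter] at hj
      exact hj.2 (by rw [hwdef]; simp [hcolzero j h])
    have hterm : ∀ j ∈ N, minDist (Θ rs) ≤ (wt (col j) : ℕ∞) := by
      intro j hj
      rw [hN, Finset.mem_filter] at hj
      exact minDist_le (hcolΘ j) hj.2
    have hsum' : wt c = ∑ j, wt (col j) := wt_sum_cols m ℓ c
    have hsum : (wt c : ℕ∞) = ∑ j, (wt (col j) : ℕ∞) := by
      rw [hsum']; push_cast; rfl
    calc (⨅ r, minDist (Const (σ r)) * minDist (Θ r))
        ≤ minDist (Const (σ rs)) * minDist (Θ rs) := iInf_le _ rs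
      _ ≤ (wt w : ℕ∞) * minDist (Θ rs) := mul_le_mul_left (minDist_le hwC hw0) _
      _ ≤ (N.card : ℕ∞) * minDist (Θ rs) := mul_le_mul_left (Nat.cast_le.mpr hwN) _
      _ ≤ ∑ j ∈ N, (wt (col j) : ℕ∞) := by
          have := Finset.card_nsmul_le_sum N (fun j => (wt (col j) : ℕ∞)) (minDist (Θ rs)) hterm
          rw [nsmul_eq_mul] at this
          exact this
      _ ≤ ∑ j, (wt (col j) : ℕ∞) :=
          Finset.sum_le_sum_of_subset (Finset.subset_univ N)
      _ = (wt c : ℕ∞) := hsum.symm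
  · -- Part 2: spectral bound with all eigenvalues is dominated
    rw [hdJ]
    refine le_iInf fun r => ?_
    by_cases hcase : ∀ β ∈ {x : F | x ^ m = algebraMap Fq F lam ∧ aeval x G.det = 0},
        aeval β (∏ j ∈ Finset.Iic r, f (σ j)) ≠ 0
    · refine le_trans (min_le_left _ _) (le_trans (hDkey r hcase) ?_)
      exact le_mul_of_one_le_left' (one_le_minDist _)
    · push_neg at hcase
      obtain ⟨β, hβΩ, hβz⟩ := hcase
      have hj : ∃ j ∈ Finset.Iic r, aeval β (f (σ j)) = 0 := by
        rw [map_prod] at hβz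
        exact Finset.prod_eq_zero_iff.mp hβz
      obtain ⟨j, hjr, hj⟩ := hj
      have hβci : βc (σ j) ∈ {x : F | x ^ m = algebraMap Fq F lam ∧ aeval x G.det = 0} := by
        refine ⟨hβm (σ j), ?_⟩
        have h1 : minpoly Fq β = f (σ j) := hfmin (σ j) β hj
        have h2 : f (σ j) ∣ G.det := h1 ▸ minpoly.dvd Fq β hβΩ.2
        obtain ⟨g, hg⟩ := h2
        rw [hg, map_mul, hβc (σ j), zero_mul]
      calc min (minDist (Dcode (F := F) m
              {x : F | x ^ m = algebraMap Fq F lam ∧ aeval x G.det = 0}))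
            (minDist (eigencode (Fq := Fq) ℓ
              (⋂ β ∈ {x : F | x ^ m = algebraMap Fq F lam ∧ aeval x G.det = 0}, Vspace ℓ G β)))
          ≤ minDist (eigencode (Fq := Fq) ℓ
              (⋂ β ∈ {x : F | x ^ m = algebraMap Fq F lam ∧ aeval x G.det = 0}, Vspace ℓ G β)) :=
            min_le_right _ _
        _ ≤ minDist (Const (σ j)) := hEkey (σ j) hβci
        _ ≤ minDist (Const (σ r)) := hmono (Finset.mem_Iic.mp hjr)
        _ ≤ minDist (Const (σ r)) * minDist (Θ r) :=
            le_mul_of_one_le_right' (one_le_minDist _)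
end

section
/- Lally bound for quasi-twisted codes: Let C ⊆ F_q^{mℓ} be a λ-QT code of index ℓ and co-index m. Fix a basis {1, γ, …, γ^{ℓ−1}} of F_{q^ℓ} over F_q and define τ : F_q^{mℓ} → (F_{q^ℓ})^m by sending a codeword, viewed as an m×ℓ array (c_{k,j}), to (c_0′,…,c_{m−1}′) with c_k′ = Σ_{j=0}^{ℓ−1} c_{k,j} γ^j. Let Ĉ be the smallest λ-constacyclic code of length m over F_{q^ℓ} containing τ(C), and let B ⊆ F_q^ℓ be the F_q-linear span of all rows c_k of all codewords c ∈ C. Then d(C) ≥ d(Ĉ)·d(B). -/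
open Polynomial

theorem lally_bound
    {Fq K : Type*} [Field Fq] [Fintype Fq] [Field K] [Algebra Fq K]
    (m ℓ : ℕ) [NeZero m] (hcop : Nat.Coprime m (Fintype.card Fq))
    (lam : Fq) (hlam : lam ≠ 0)
    (𝓒 : Submodule Fq (ZMod m × Fin ℓ → Fq))
    (hQT : ∀ c ∈ 𝓒, rho m ℓ lam c ∈ 𝓒)
    (γ : K) (bK : Module.Basis (Fin ℓ) Fq K) (hbK : ∀ j : Fin ℓ, bK j = γ ^ (j : ℕ))
    (τ : (ZMod m × Fin ℓ → Fq) → (ZMod m → K))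
    (hτ : ∀ c k, τ c k = ∑ j : Fin ℓ, algebraMap Fq K (c (k, j)) * γ ^ (j : ℕ))
    (Chat : Submodule K (ZMod m → K))
    (hChat : Chat = sInf {D : Submodule K (ZMod m → K) |
      (∀ c ∈ 𝓒, τ c ∈ D) ∧
      ∀ d ∈ D, (fun k => (if k = 0 then algebraMap Fq K lam else 1) * d (k - 1)) ∈ D})
    (B : Submodule Fq (Fin ℓ → Fq))
    (hB : B = Submodule.span Fq {u | ∃ c ∈ 𝓒, ∃ k : ZMod m, u = fun j => c (k, j)}) :
    minDist (Chat : Set (ZMod m → K)) * minDist (B : Set (Fin ℓ → Fq)) ≤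
      minDist (𝓒 : Set (ZMod m × Fin ℓ → Fq)) := by

  classical
  rw [minDist]
  apply le_sInf
  rintro n ⟨c, hc, hc0, rfl⟩
  have hτc : ∀ k, τ c k = ∑ j, c (k, j) • bK j := by
    intro k
    rw [hτ]
    exact Finset.sum_congr rfl fun j _ => by rw [hbK, Algebra.smul_def]
  have hker : ∀ k, τ c k = 0 → ∀ j, c (k, j) = 0 := by
    intro k hk
    exact Fintype.linearIndependent_iff.mp bK.linearIndependent _ (by rw [← hτc, hk])
  have hmem : τ c ∈ Chat := by
    rw [hChat, Submodule.mem_sInf]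
    intro D hD
    exact hD.1 c hc
  have hτ0 : τ c ≠ 0 := by
    intro h
    apply hc0
    funext p
    exact hker p.1 (by rw [h]; rfl) p.2
  have ha : minDist (Chat : Set (ZMod m → K)) ≤ (wt (τ c) : ℕ∞) :=
    sInf_le ⟨τ c, hmem, hτ0, rfl⟩
  have hb : ∀ k, τ c k ≠ 0 →
      minDist (B : Set (Fin ℓ → Fq)) ≤ (wt (fun j => c (k, j)) : ℕ∞) := by
    intro k hk
    refine sInf_le ⟨fun j => c (k, j), ?_, ?_, rfl⟩
    · rw [hB]; exact Submodule.subset_span ⟨c, hc, k, rfl⟩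
    · intro h0
      apply hk
      rw [hτc]
      exact Finset.sum_eq_zero fun j _ => by
        rw [show c (k, j) = 0 from congrFun h0 j, zero_smul]
  set S := Finset.univ.filter (fun k => τ c k ≠ 0) with hS
  have hwtτ : wt (τ c) = S.card := by rw [wt, hS]
  have hsum : ∑ k ∈ S, wt (fun j => c (k, j)) ≤ wt c := by
    have h1 : wt c = ∑ k : ZMod m, wt (fun j => c (k, j)) := by
      simp only [wt, Finset.card_filter, Fintype.sum_prod_type]
    rw [h1]
    exact Finset.sum_le_sum_of_subset (Finset.subset_univ S)
  calc minDist (Chat : Set (ZMod m → K)) * minDist (B : Set (Fin ℓ → Fq))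
      ≤ (S.card : ℕ∞) * minDist (B : Set (Fin ℓ → Fq)) :=
        mul_le_mul' (hwtτ ▸ ha) le_rfl
    _ ≤ ∑ k ∈ S, (wt (fun j => c (k, j)) : ℕ∞) := by
        rw [← nsmul_eq_mul]
        exact Finset.card_nsmul_le_sum S _ _
          (fun k hk => hb k (Finset.mem_filter.mp hk).2)
    _ = ((∑ k ∈ S, wt (fun j => c (k, j)) : ℕ) : ℕ∞) := by rw [Nat.cast_sum]
    _ ≤ (wt c : ℕ∞) := Nat.cast_le.mpr hsum
end

section
/- The Lally bound dominates the eigencode distance: Let C ⊆ F_q^{mℓ} be a nonzero λ-QT code of index ℓ and co-index m whose eigenvalue set equals all of Ω, and let ℂ_Ω be the eigencode of ∩_{β∈Ω} V_β. Let Ĉ be the smallest λ-constacyclic code of length m over F_{q^ℓ} containing τ(C) (for a fixed basis {1, γ, …, γ^{ℓ−1}} of F_{q^ℓ} over F_q, with τ sending the array (c_{k,j}) to the vector with entries Σ_j c_{k,j}γ^j), and let B ⊆ F_q^ℓ be the F_q-span of all rows of all codewords of C. Then the Lally estimate d_L = d(Ĉ)·d(B) satisfies d(C) ≥ d_L ≥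 d(ℂ_Ω). -/
open Polynomial

private lemma natCast_ne_zero_of_coprime' {Fq : Type*} [Field Fq] [Fintype Fq]
    {m : ℕ} (hcop : Nat.Coprime m (Fintype.card Fq)) : (m : Fq) ≠ 0 := by
  intro h
  have hb := Nat.gcd_eq_gcd_ab m (Fintype.card Fq)
  rw [hcop.gcd_eq_one] at hb
  have h2 := congrArg (fun z : ℤ => (z : Fq)) hb
  push_cast at h2
  rw [h, FiniteField.cast_card_eq_zero] at h2
  simp at h2

private lemma poly_vanish_zero' {Fq F : Type*} [Field Fq] [Fintype Fq] [Field F] [Algebra Fq F]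
    (m : ℕ) [NeZero m] (hcop : Nat.Coprime m (Fintype.card Fq))
    (lam : Fq) (hlam : lam ≠ 0)
    (hsplit : IsSplittingField Fq F (X ^ m - C lam))
    (P : Polynomial F) (hdeg : P.degree < (m : ℕ))
    (hv : ∀ β : F, β ^ m = algebraMap Fq F lam → P.eval β = 0) : P = 0 := by
  classical
  by_contra hP
  have hm : (m : Fq) ≠ 0 := natCast_ne_zero_of_coprime' hcop
  have hsep : (X ^ m - C lam : Polynomial Fq).Separable := separable_X_pow_sub_C lam hm hlam
  have hcard : Fintype.card ((X ^ m - C lam : Polynomial Fq).rootSet F) = m := by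
    rw [card_rootSet_eq_natDegree hsep hsplit.splits, natDegree_X_pow_sub_C]
  set s : Finset F := ((X ^ m - C lam : Polynomial Fq).rootSet F).toFinset with hs
  have hscard : s.card = m := by rw [hs, Set.toFinset_card, hcard]
  have hsub : s ⊆ P.roots.toFinset := by
    intro x hx
    rw [hs, Set.mem_toFinset, mem_rootSet] at hx
    have hx2 : x ^ m = algebraMap Fq F lam := by
      have h3 := hx.2
      rw [map_sub, map_pow, aeval_X, aeval_C, sub_eq_zero] at h3
      exact h3
    rw [Multiset.mem_toFinset, mem_roots hP]
    exact hv x hx2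
  have h4 : m ≤ Multiset.card P.roots :=
    hscard ▸ le_trans (Finset.card_le_card hsub) (Multiset.toFinset_card_le _)
  have h5 : (m : WithBot ℕ) ≤ P.degree := by
    rw [degree_eq_natDegree hP]
    exact_mod_cast le_trans h4 P.card_roots'
  exact absurd hdeg (not_lt.mpr h5)

private lemma minDist_mono' {ι K : Type*} [Fintype ι] [Zero K] {S T : Set (ι → K)}
    (h : S ⊆ T) : minDist T ≤ minDist S := by
  apply sInf_le_sInf
  rintro n ⟨c, hc, h1, h2⟩
  exact ⟨c, h hc, h1, h2⟩

private lemma one_le_minDist' {ι K : Type*} [Fintype ι] [Zero K] (S : Set (ι → K)) :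
    1 ≤ minDist S := by
  apply le_sInf
  rintro n ⟨c, _, hc0, rfl⟩
  have : wt c ≠ 0 := by
    intro h
    apply hc0
    classical
    rw [wt, Finset.card_eq_zero, Finset.filter_eq_empty_iff] at h
    funext i
    have := h (Finset.mem_univ i)
    simpa using this
  exact_mod_cast Nat.one_le_iff_ne_zero.mpr this

theorem lally_dominates_eigencode
    {Fq F K : Type*} [Field Fq] [Fintype Fq] [Field F] [Algebra Fq F] [Field K] [Algebra Fq K]
    (m ℓ : ℕ) [NeZero m] (hcop : Nat.Coprime m (Fintype.card Fq))
    (lam : Fq) (hlam : lam ≠ 0)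
    (hsplit : IsSplittingField Fq F (X ^ m - C lam))
    (𝓒 : Submodule Fq (ZMod m × Fin ℓ → Fq))
    (hQT : ∀ c ∈ 𝓒, rho m ℓ lam c ∈ 𝓒)
    (h0 : 𝓒 ≠ ⊥)
    (G : Matrix (Fin ℓ) (Fin ℓ) (Polynomial Fq))
    (htri : ∀ i j, j < i → G i j = 0)
    (hdiv : ∀ j, G j j ∣ X ^ m - C lam)
    (hGen : ∀ v : Fin ℓ → Polynomial Fq,
      arrOf m ℓ lam v ∈ 𝓒 ↔ v ∈ Submodule.span (Polynomial Fq) (Set.range fun i j => G i j))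
    (hall : ∀ x : F, x ^ m = algebraMap Fq F lam → Polynomial.aeval x G.det = 0)
    (VΩ : Set (Fin ℓ → F))
    (hVΩ : VΩ = ⋂ β ∈ {x : F | x ^ m = algebraMap Fq F lam}, Vspace ℓ G β)
    (γ : K) (bK : Module.Basis (Fin ℓ) Fq K) (hbK : ∀ j : Fin ℓ, bK j = γ ^ (j : ℕ))
    (τ : (ZMod m × Fin ℓ → Fq) → (ZMod m → K))
    (hτ : ∀ c k, τ c k = ∑ j : Fin ℓ, algebraMap Fq K (c (k, j)) * γ ^ (j : ℕ))
    (Chat : Submodule K (ZMod m → K))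
    (hChat : Chat = sInf {D : Submodule K (ZMod m → K) |
      (∀ c ∈ 𝓒, τ c ∈ D) ∧
      ∀ d ∈ D, (fun k => (if k = 0 then algebraMap Fq K lam else 1) * d (k - 1)) ∈ D})
    (B : Submodule Fq (Fin ℓ → Fq))
    (hB : B = Submodule.span Fq {u | ∃ c ∈ 𝓒, ∃ k : ZMod m, u = fun j => c (k, j)}) :
    minDist (Chat : Set (ZMod m → K)) * minDist (B : Set (Fin ℓ → Fq)) ≤
      minDist (𝓒 : Set (ZMod m × Fin ℓ → Fq)) ∧
    minDist (eigencode (Fq := Fq) ℓ VΩ) ≤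
      minDist (Chat : Set (ZMod m → K)) * minDist (B : Set (Fin ℓ → Fq)) := by
  classical
  have hmonic : (X ^ m - C lam : Polynomial Fq).Monic := monic_X_pow_sub_C lam (NeZero.ne m)
  -- ### weight decomposition
  have hwt : ∀ c : ZMod m × Fin ℓ → Fq, wt c = ∑ k : ZMod m, wt (fun j => c (k, j)) := by
    intro c
    unfold wt
    rw [Finset.card_filter]
    rw [Fintype.sum_prod_type]
    congr 1
    funext k
    rw [Finset.card_filter]
  -- ### τ c k vanishes iff the k-th row vanishes
  have hτrow : ∀ (c : ZMod m × Fin ℓ → Fq) (k : ZMod m),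
      τ c k = bK.equivFun.symm (fun j => c (k, j)) := by
    intro c k
    rw [hτ, Module.Basis.equivFun_symm_apply]
    apply Finset.sum_congr rfl
    intro j _
    rw [hbK, Algebra.smul_def]
  have hτzero : ∀ (c : ZMod m × Fin ℓ → Fq) (k : ZMod m),
      τ c k = 0 ↔ (fun j => c (k, j)) = 0 := by
    intro c k
    rw [hτrow]
    exact ⟨fun h => bK.equivFun.symm.map_eq_zero_iff.mp h,
      fun h => by rw [h]; exact map_zero _⟩
  -- ### Part 1 : Lally bound
  have part1 : minDist (Chat : Set (ZMod m → K)) * minDist (B : Set (Fin ℓ → Fq)) ≤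
      minDist (𝓒 : Set (ZMod m × Fin ℓ → Fq)) := by
    apply le_sInf
    rintro n ⟨c, hc, hc0, rfl⟩
    have hτC : τ c ∈ Chat := by
      rw [hChat]
      refine Submodule.mem_sInf.mpr ?_
      rintro D ⟨hD1, -⟩
      exact hD1 c hc
    have hτ0 : τ c ≠ 0 := by
      intro h
      apply hc0
      funext p
      have h1 : (fun j => c (p.1, j)) = 0 := (hτzero c p.1).mp (congrFun h p.1)
      exact congrFun h1 p.2
    set A : Finset (ZMod m) := Finset.univ.filter (fun k => τ c k ≠ 0) with hA
    have hwtτ : wt (τ c) = A.card := by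
      unfold wt
      rw [hA]
    have h1 : minDist (Chat : Set (ZMod m → K)) ≤ (A.card : ℕ∞) :=
      sInf_le ⟨τ c, hτC, hτ0, by rw [hwtτ]⟩
    have h2 : ∀ k ∈ A, minDist (B : Set (Fin ℓ → Fq)) ≤ ((wt fun j => c (k, j) : ℕ) : ℕ∞) := by
      intro k hk
      have hkA : τ c k ≠ 0 := by
        rw [hA] at hk
        exact (Finset.mem_filter.mp hk).2
      have hrowne : (fun j => c (k, j)) ≠ 0 := fun h => hkA ((hτzero c k).mpr h)
      have hrowB : (fun j => c (k, j)) ∈ B := by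
        rw [hB]
        exact Submodule.subset_span ⟨c, hc, k, rfl⟩
      exact sInf_le ⟨_, hrowB, hrowne, rfl⟩
    calc minDist (Chat : Set (ZMod m → K)) * minDist (B : Set (Fin ℓ → Fq))
        ≤ (A.card : ℕ∞) * minDist (B : Set (Fin ℓ → Fq)) := mul_le_mul_left h1 _
      _ = ∑ _k ∈ A, minDist (B : Set (Fin ℓ → Fq)) := by
          rw [Finset.sum_const, nsmul_eq_mul]
      _ ≤ ∑ k ∈ A, ((wt fun j => c (k, j) : ℕ) : ℕ∞) := Finset.sum_le_sum h2
      _ ≤ ∑ k : ZMod m, ((wt fun j => c (k, j) : ℕ) : ℕ∞) :=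
          Finset.sum_le_sum_of_subset (Finset.filter_subset _ _)
      _ = ((wt c : ℕ) : ℕ∞) := by rw [hwt c, Nat.cast_sum]
  refine ⟨part1, ?_⟩
  -- ### Part 2 : rows lie in the eigencode
  have hrow : ∀ c ∈ 𝓒, ∀ k : ZMod m, (fun j => c (k, j)) ∈ eigencode (Fq := Fq) ℓ VΩ := by
    intro c hc k w hw
    -- polynomial lift of c
    set v : Fin ℓ → Polynomial Fq :=
      fun j => ∑ i ∈ Finset.range m, C (c ((i : ZMod m), j)) * X ^ i with hv
    have hdegv : ∀ j, (v j).degree < (m : ℕ) := by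
      intro j
      rw [hv]
      apply lt_of_le_of_lt (degree_sum_le _ _)
      rw [Finset.sup_lt_iff (by exact_mod_cast WithBot.bot_lt_coe m)]
      intro i hi
      apply lt_of_le_of_lt (degree_C_mul_X_pow_le _ _)
      exact_mod_cast Finset.mem_range.mp hi
    have hmod : ∀ j, v j %ₘ (X ^ m - C lam) = v j := by
      intro j
      rw [modByMonic_eq_self_iff hmonic, degree_X_pow_sub_C (Nat.pos_of_ne_zero (NeZero.ne m))]
      exact hdegv j
    have hcoeff : ∀ (j : Fin ℓ) (k' : ZMod m), (v j).coeff k'.val = c (k', j) := by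
      intro j k'
      rw [hv]
      simp only [finset_sum_coeff, coeff_C_mul, coeff_X_pow]
      rw [Finset.sum_eq_single k'.val]
      · simp [ZMod.natCast_val, ZMod.cast_id]
      · intro i _ hne
        simp [Ne.symm hne]
      · intro h
        exact absurd (Finset.mem_range.mpr (ZMod.val_lt k')) h
    have harr : arrOf m ℓ lam v = c := by
      funext p
      unfold arrOf
      rw [hmod, hcoeff]
    have hvspan : v ∈ Submodule.span (Polynomial Fq) (Set.range fun i j => G i j) :=
      (hGen v).mp (by rw [harr]; exact hc)
    -- the pairing with w vanishes at every root β
    have hker_gen : ∀ β : F, β ^ m = algebraMap Fq F lam →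
        ∀ x ∈ Submodule.span (Polynomial Fq) (Set.range fun i j => G i j),
          ∑ j, (aeval β (x j)) * w j = 0 := by
      intro β hβ
      have hwβ : w ∈ Vspace ℓ G β := by
        rw [hVΩ] at hw
        exact Set.mem_iInter₂.mp hw β hβ
      have hwβ' : ∀ i, ∑ j, (aeval β (G i j)) * w j = 0 := by
        intro i
        have := congrFun hwβ i
        simpa [Matrix.mulVec, dotProduct, Matrix.map_apply] using this
      intro x hx
      induction hx using Submodule.span_induction with
      | mem x hx =>
          obtain ⟨i, rfl⟩ := hx
          exact hwβ' i
      | zero => simp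
      | add x y hx hy ihx ihy =>
          simp only [Pi.add_apply, map_add, add_mul, Finset.sum_add_distrib, ihx, ihy, add_zero]
      | smul a x hx ih =>
          simp only [Pi.smul_apply, smul_eq_mul, map_mul, mul_assoc]
          rw [← Finset.mul_sum, ih, mul_zero]
    have hker : ∀ β : F, β ^ m = algebraMap Fq F lam →
        ∑ j, (aeval β (v j)) * w j = 0 := fun β hβ => hker_gen β hβ v hvspan
    -- the polynomial P
    set P : Polynomial F := ∑ j, ((v j).map (algebraMap Fq F)) * C (w j) with hP
    have hPdeg : P.degree < (m : ℕ) := by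
      rw [hP]
      apply lt_of_le_of_lt (degree_sum_le _ _)
      rw [Finset.sup_lt_iff (by exact_mod_cast WithBot.bot_lt_coe m)]
      intro j _
      calc (((v j).map (algebraMap Fq F)) * C (w j)).degree
          ≤ ((v j).map (algebraMap Fq F)).degree + (C (w j)).degree := degree_mul_le _ _
        _ ≤ (v j).degree + 0 := add_le_add degree_map_le degree_C_le
        _ = (v j).degree := add_zero _
        _ < (m : ℕ) := hdegv j
    have hPeval : ∀ β : F, β ^ m = algebraMap Fq F lam → P.eval β = 0 := by
      intro β hβ
      rw [hP, eval_finset_sum]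
      have : ∀ j ∈ Finset.univ, (((v j).map (algebraMap Fq F)) * C (w j)).eval β
          = (aeval β (v j)) * w j := by
        intro j _
        rw [eval_mul, eval_C, eval_map, aeval_def]
      rw [Finset.sum_congr rfl this]
      exact hker β hβ
    have hP0 : P = 0 := poly_vanish_zero' m hcop lam hlam hsplit P hPdeg hPeval
    have hPcoeff : P.coeff k.val = ∑ j, (algebraMap Fq F (c (k, j))) * w j := by
      rw [hP]
      rw [finset_sum_coeff]
      apply Finset.sum_congr rfl
      intro j _
      rw [coeff_mul_C, coeff_map, hcoeff]
    have hz : ∑ j, (algebraMap Fq F (c (k, j))) * w j = 0 := by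
      rw [← hPcoeff, hP0, coeff_zero]
    calc ∑ j, w j * algebraMap Fq F (c (k, j))
        = ∑ j, (algebraMap Fq F (c (k, j))) * w j :=
          Finset.sum_congr rfl (fun j _ => mul_comm _ _)
      _ = 0 := hz
  -- eigencode contains B
  have hsub : (B : Set (Fin ℓ → Fq)) ⊆ eigencode (Fq := Fq) ℓ VΩ := by
    rw [hB]
    intro u hu
    induction hu using Submodule.span_induction with
    | mem x hx =>
        obtain ⟨c, hc, k, rfl⟩ := hx
        exact hrow c hc k
    | zero => intro w hw; simp
    | add x y hx hy ihx ihy =>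
        intro w hw
        have h1 := ihx w hw
        have h2 := ihy w hw
        simp only [Pi.add_apply, map_add, mul_add, Finset.sum_add_distrib, h1, h2, add_zero]
    | smul a x hx ih =>
        intro w hw
        have h1 := ih w hw
        simp only [Pi.smul_apply, smul_eq_mul, map_mul]
        calc ∑ j, w j * (algebraMap Fq F a * algebraMap Fq F (x j))
            = algebraMap Fq F a * ∑ j, w j * algebraMap Fq F (x j) := by
              rw [Finset.mul_sum]; apply Finset.sum_congr rfl; intro j _; ring
          _ = 0 := by rw [h1, mul_zero]
  calc minDist (eigencode (Fq := Fq) ℓ VΩ) ≤ minDist (B : Set (Fin ℓ → Fq)) := minDist_mono' hsub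
    _ = 1 * minDist (B : Set (Fin ℓ → Fq)) := (one_mul _).symm
    _ ≤ minDist (Chat : Set (ZMod m → K)) * minDist (B : Set (Fin ℓ → Fq)) :=
        mul_le_mul_left (one_le_minDist' _) _
end
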